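/- Let K be a bounded linear operator on H, and let Λ = (Λ_i)_{i∈I} and Γ = (Γ_i)_{i∈I} be two Parseval K-g-frames for H such that ∑_{i∈I} Λ_i*(Γ_i f) = 0 for all f ∈ H (i.e., T_Λ T_Γ* = 0). Then (Λ_i + Γ_i)_{i∈I} is a 2-tight K-g-frame for H, i.e., ∑_{i∈I} ‖(Λ_i + Γ_i) f‖² = 2‖K* f‖² for all f ∈ H. -/

import Mathlib

open ContinuousLinearMap

noncomputable section

variable {I : Type*} {H : Type*} [NormedAddCommGroup H] [InnerProductSpace ℂ H] [CompleteSpace H]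
  {G : I → Type*} [∀ i, NormedAddCommGroup (G i)] [∀ i, InnerProductSpace ℂ (G i)]
  [∀ i, CompleteSpace (G i)]

/-- `Λ` is a Bessel g-sequence: for some `B > 0`, `∑ᵢ ‖Λᵢ f‖² ≤ B ‖f‖²` for all `f`. -/
def IsGBessel (Λ : ∀ i, H →L[ℂ] G i) : Prop :=
  ∃ B : ℝ, 0 < B ∧ ∀ f : H,
    Summable (fun i => ‖Λ i f‖ ^ 2) ∧ (∑' i, ‖Λ i f‖ ^ 2) ≤ B * ‖f‖ ^ 2

/-- `Λ` is a `K`-g-frame: for some `A, B > 0`,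
`A ‖K* f‖² ≤ ∑ᵢ ‖Λᵢ f‖² ≤ B ‖f‖²` for all `f`. -/
def IsKgFrame (K : H →L[ℂ] H) (Λ : ∀ i, H →L[ℂ] G i) : Prop :=
  ∃ A B : ℝ, 0 < A ∧ 0 < B ∧ ∀ f : H,
    Summable (fun i => ‖Λ i f‖ ^ 2) ∧
    A * ‖ContinuousLinearMap.adjoint K f‖ ^ 2 ≤ (∑' i, ‖Λ i f‖ ^ 2) ∧
    (∑' i, ‖Λ i f‖ ^ 2) ≤ B * ‖f‖ ^ 2

/-- `T : (⊕ᵢ Hᵢ)_{ℓ²} → H` is the synthesis operator of `Λ`, characterized by its adjoint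
(the analysis operator) satisfying `(T* f)ᵢ = Λᵢ f` for all `f`. -/
def IsSynthesis (Λ : ∀ i, H →L[ℂ] G i) (T : lp G 2 →L[ℂ] H) : Prop :=
  ∀ (f : H) (i : I), (ContinuousLinearMap.adjoint T f : ∀ i, G i) i = Λ i f

/-- `Γ` is a `K`-dual (Bessel g-sequence) of `Λ`: `K f = ∑ᵢ Λᵢ* (Γᵢ f)` for all `f`,
the sum converging in `H`. -/
def IsKDual (K : H →L[ℂ] H) (Λ Γ : ∀ i, H →L[ℂ] G i) : Prop :=
  ∀ f : H, HasSum (fun i => ContinuousLinearMap.adjoint (Λ i) (Γ i f)) (K f)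

/-- if `Λ`, `Γ` are Parseval `K`-g-frames with `∑ᵢ Λᵢ*(Γᵢ f) = 0` for all
`f`, then `(Λᵢ + Γᵢ)ᵢ` is a 2-tight `K`-g-frame. -/
theorem add_parseval_isTwoTight
    (K : H →L[ℂ] H) (Λ Γ : ∀ i, H →L[ℂ] G i)
    (hΛ : ∀ f : H, Summable (fun i => ‖Λ i f‖ ^ 2) ∧
      (∑' i, ‖Λ i f‖ ^ 2) = ‖ContinuousLinearMap.adjoint K f‖ ^ 2)
    (hΓ : ∀ f : H, Summable (fun i => ‖Γ i f‖ ^ 2) ∧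
      (∑' i, ‖Γ i f‖ ^ 2) = ‖ContinuousLinearMap.adjoint K f‖ ^ 2)
    (h0 : ∀ f : H, HasSum (fun i => ContinuousLinearMap.adjoint (Λ i) (Γ i f)) 0) :
    ∀ f : H, Summable (fun i => ‖(Λ i + Γ i) f‖ ^ 2) ∧
      (∑' i, ‖(Λ i + Γ i) f‖ ^ 2) = 2 * ‖ContinuousLinearMap.adjoint K f‖ ^ 2 := by
  intro f
  have sΛ : HasSum (fun i => ‖Λ i f‖ ^ 2) (‖ContinuousLinearMap.adjoint K f‖ ^ 2) :=
    (hΛ f).2 ▸ (hΛ f).1.hasSum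
  have sΓ : HasSum (fun i => ‖Γ i f‖ ^ 2) (‖ContinuousLinearMap.adjoint K f‖ ^ 2) :=
    (hΓ f).2 ▸ (hΓ f).1.hasSum
  have sc : HasSum (fun i =>
      (RCLike.re (inner ℂ (Λ i f) (Γ i f) : ℂ))) 0 := by
    have h1 : HasSum (fun i => (inner ℂ f (ContinuousLinearMap.adjoint (Λ i) (Γ i f)) : ℂ)) 0 := by
      simpa using (h0 f).mapL (innerSL ℂ f)
    have h2 : HasSum (fun i => (inner ℂ (Λ i f) (Γ i f) : ℂ)) 0 := by
      simpa only [ContinuousLinearMap.adjoint_inner_right] using h1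
    simpa using h2.mapL (RCLike.reCLM (K := ℂ))
  have key : HasSum (fun i => ‖(Λ i + Γ i) f‖ ^ 2)
      (2 * ‖ContinuousLinearMap.adjoint K f‖ ^ 2) := by
    have := (sΛ.add ((sc.mul_left 2).add sΓ))
    have heq : (fun i => ‖Λ i f‖ ^ 2 + (2 * RCLike.re (inner ℂ (Λ i f) (Γ i f) : ℂ) + ‖Γ i f‖ ^ 2))
        = fun i => ‖(Λ i + Γ i) f‖ ^ 2 := by
      funext i
      rw [ContinuousLinearMap.add_apply, @norm_add_sq ℂ]; ring
    rw [heq] at this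
    convert this using 1
    ring
  exact ⟨key.summable, key.tsum_eq⟩
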